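/- The optimal value of the multiple-knapsack relaxation is an upper bound on the number of non-critical patients that can simultaneously be scheduled on chairs in any feasible schedule. -/
import Mathlib


open Finset

/-- Every feasible chair schedule induces a feasible solution of the multiple-knapsack
relaxation with value equal to the number of chair-scheduled patients; hence the
knapsack optimum is an upper bound. -/
theorem stmt_4 {Q T S : Type*} [Fintype Q] [Fintype T] [Fintype S]
    [DecidableEq T] [DecidableEq S]
    (f v : Q → ℕ) (H m : ℕ) (hm : ∀ p, m ≤ v p)
    (σ : Q → Option (T × S × ℕ))
    (hstart : ∀ p t s hp, σ p = some (t, s, hp) → m + 1 ≤ hp ∧ hp + f p ≤ H + 1)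
    (hdisj : ∀ p q t s hp hq, p ≠ q → σ p = some (t, s, hp) → σ q = some (t, s, hq) →
      Disjoint (Finset.Ico hp (hp + f p)) (Finset.Ico hq (hq + f q))) :
    ∃ μ : Q → S → ℕ,
      (∀ p s, μ p s ≤ 1) ∧
      (∀ p, ∑ s : S, μ p s ≤ 1) ∧
      (∀ s : S, ∑ p : Q, f p * μ p s ≤ Fintype.card T * (H - m)) ∧
      ∑ p : Q, ∑ s : S, μ p s = (univ.filter (fun p : Q => σ p ≠ none)).card := by
  classical
  refine ⟨fun p s => if ∃ t hp, σ p = some (t, s, hp) then 1 else 0, ?_, ?_, ?_, ?_⟩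
  · intro p s
    dsimp only
    split <;> simp
  · intro p
    rcases h : σ p with _ | ⟨t0, s0, h0⟩
    · simp [h]
    · simp [h, eq_comm]
  · intro s
    -- key per-day bound
    have key : ∀ t : T,
        ∑ p ∈ univ.filter (fun p => ∃ hp, σ p = some (t, s, hp)), f p ≤ H - m := by
      intro t
      set A := univ.filter (fun p => ∃ hp, σ p = some (t, s, hp)) with hA
      set st : Q → ℕ := fun p =>
        if h : ∃ hp, σ p = some (t, s, hp) then h.choose else 0 with hst
      have hσA : ∀ p ∈ A, σ p = some (t, s, st p) := by
        intro p hp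
        simp only [hA, mem_filter, mem_univ, true_and] at hp
        simp only [hst, dif_pos hp]
        exact hp.choose_spec
      have hcard : ∑ p ∈ A, f p
          = (A.biUnion (fun p => Finset.Ico (st p) (st p + f p))).card := by
        rw [Finset.card_biUnion]
        · refine Finset.sum_congr rfl fun p _ => ?_
          rw [Nat.card_Ico]; omega
        · intro x hx y hy hxy
          exact hdisj x y t s (st x) (st y) hxy (hσA x hx) (hσA y hy)
      rw [hcard]
      calc (A.biUnion (fun p => Finset.Ico (st p) (st p + f p))).card
          ≤ (Finset.Ico (m + 1) (H + 1)).card := by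
            apply Finset.card_le_card
            intro a ha
            rw [Finset.mem_biUnion] at ha
            obtain ⟨p, hpA, ha⟩ := ha
            have hb := hstart p t s (st p) (hσA p hpA)
            rw [Finset.mem_Ico] at ha ⊢
            omega
        _ = H - m := by rw [Nat.card_Ico]; omega
    -- rewrite the sum over p as a double sum over t
    have hswap : ∑ p : Q, f p * (if ∃ t hp, σ p = some (t, s, hp) then 1 else 0)
        = ∑ t : T, ∑ p ∈ univ.filter (fun p => ∃ hp, σ p = some (t, s, hp)), f p := by
      have hPer : ∀ p : Q, f p * (if ∃ t hp, σ p = some (t, s, hp) then 1 else 0)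
          = ∑ t : T, (if ∃ hp, σ p = some (t, s, hp) then f p else 0) := by
        intro p
        rcases h : σ p with _ | ⟨t0, s0, h0⟩
        · simp [h]
        · by_cases hs : s0 = s
          · subst hs
            simp [h, eq_comm]
          · simp [h, hs, Ne.symm hs, eq_comm]
      rw [Finset.sum_congr rfl fun p _ => hPer p, Finset.sum_comm]
      refine Finset.sum_congr rfl fun t _ => ?_
      rw [Finset.sum_filter]
    rw [hswap]
    calc ∑ t : T, ∑ p ∈ univ.filter (fun p => ∃ hp, σ p = some (t, s, hp)), f p
        ≤ ∑ _t : T, (H - m) := Finset.sum_le_sum fun t _ => key t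
      _ = Fintype.card T * (H - m) := by simp [Finset.sum_const, mul_comm]
  · have hPer : ∀ p : Q, ∑ s : S, (if ∃ t hp, σ p = some (t, s, hp) then 1 else 0)
        = if σ p ≠ none then 1 else 0 := by
      intro p
      rcases h : σ p with _ | ⟨t0, s0, h0⟩
      · simp [h]
      · simp [h, eq_comm]
    rw [Finset.sum_congr rfl fun p _ => hPer p]
    simp [Finset.card_filter]
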